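/- Let R be a finite Frobenius ring (i.e., a finite ring admitting a generating character) and let 𝒰 be a subgroup of GL(n,R). Then the right action of 𝒰 on R^n given by (x,U) ↦ xU and the left action of 𝒰 on R^n given by (U,x) ↦ (U x^T)^T have the same number of orbits. -/

import Mathlib

open Matrix

noncomputable section

/-- `χ` is a generating character of the finite ring `R`. -/
def IsGeneratingChar {R : Type*} [Ring R] [Fintype R] (χ : AddChar R ℂ) : Prop :=
  ∀ ψ : AddChar R ℂ, ∃! r : R, ∀ x : R, ψ x = χ (x * r)

/-- A finite ring is Frobenius iff it admits a generating character. -/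
def IsFrobeniusRing (R : Type*) [Ring R] [Fintype R] : Prop :=
  ∃ χ : AddChar R ℂ, IsGeneratingChar χ

section CharLemmas

variable {R : Type*} [Ring R] [Fintype R] {χ : AddChar R ℂ}

lemma gen_right (hχ : IsGeneratingChar χ) {a : R} (ha : ∀ x : R, χ (x * a) = 1) : a = 0 := by
  obtain ⟨r, -, hr⟩ := hχ 1
  have h2 : a = r := hr a (fun x => by simpa using (ha x).symm)
  have h3 : (0 : R) = r := hr 0 (fun x => by simp)
  exact h2.trans h3.symm

/-- The additive character `t ↦ χ (a * t)`. -/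
def charL (χ : AddChar R ℂ) (a : R) : AddChar R ℂ where
  toFun t := χ (a * t)
  map_zero_eq_one' := by simp
  map_add_eq_mul' x y := by rw [mul_add, AddChar.map_add_eq_mul]

/-- The additive character `t ↦ χ (t * a)`. -/
def charR (χ : AddChar R ℂ) (a : R) : AddChar R ℂ where
  toFun t := χ (t * a)
  map_zero_eq_one' := by simp
  map_add_eq_mul' x y := by rw [add_mul, AddChar.map_add_eq_mul]

lemma gen_left (hχ : IsGeneratingChar χ) {a : R} (ha : ∀ t : R, χ (a * t) = 1) : a = 0 := by
  classical
  by_contra h0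
  set c : ℂ := (Fintype.card R : ℂ) with hc
  have hc0 : c ≠ 0 := Nat.cast_ne_zero.mpr Fintype.card_ne_zero
  have hinnerL : ∀ x : R, (∑ y : R, χ (x * y)) = if (∀ y, χ (x * y) = 1) then c else 0 := by
    intro x
    have := AddChar.sum_eq_ite (charL χ x)
    simp only [charL, AddChar.coe_mk] at this
    rw [show (∑ y : R, χ (x * y)) = ∑ y : R, (charL χ x) y from rfl, AddChar.sum_eq_ite]
    congr 1
    · simp only [eq_iff_iff]
      rw [AddChar.eq_zero_iff]
      rfl
  have hinnerR : ∀ y : R, (∑ x : R, χ (x * y)) = if (∀ x, χ (x * y) = 1) then c else 0 := by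
    intro y
    rw [show (∑ x : R, χ (x * y)) = ∑ x : R, (charR χ y) x from rfl, AddChar.sum_eq_ite]
    congr 1
    · simp only [eq_iff_iff]
      rw [AddChar.eq_zero_iff]
      rfl
  have h1 : (∑ x : R, ∑ y : R, χ (x * y))
      = ((Finset.univ.filter (fun x : R => ∀ y, χ (x * y) = 1)).card : ℂ) * c := by
    rw [Finset.sum_congr rfl (fun x _ => hinnerL x), ← Finset.sum_filter, Finset.sum_const,
      nsmul_eq_mul]
  have h2 : (∑ x : R, ∑ y : R, χ (x * y)) = c := by
    rw [Finset.sum_comm]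
    rw [Finset.sum_congr rfl (fun y _ => hinnerR y)]
    have : ∀ y : R, (if (∀ x, χ (x * y) = 1) then c else 0) = if y = 0 then c else 0 := by
      intro y
      congr 1
      simp only [eq_iff_iff]
      constructor
      · exact fun h => gen_right hχ h
      · rintro rfl x; simp
    rw [Finset.sum_congr rfl (fun y _ => this y), Finset.sum_ite_eq' Finset.univ 0 (fun _ => c)]
    simp
  have hcard : ((Finset.univ.filter (fun x : R => ∀ y, χ (x * y) = 1)).card : ℂ) = 1 := by
    have := h1.symm.trans h2
    field_simp at this
    exact_mod_cast this
  have hcard' : (Finset.univ.filter (fun x : R => ∀ y, χ (x * y) = 1)).card = 1 := by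
    exact_mod_cast hcard
  have hsub : ({0, a} : Finset R) ⊆ Finset.univ.filter (fun x : R => ∀ y, χ (x * y) = 1) := by
    intro x hx
    simp only [Finset.mem_insert, Finset.mem_singleton] at hx
    rcases hx with rfl | rfl
    · simp
    · simp only [Finset.mem_filter, Finset.mem_univ, true_and]
      exact ha
  have : ({0, a} : Finset R).card ≤ 1 := hcard' ▸ Finset.card_le_card hsub
  rw [Finset.card_pair (Ne.symm h0)] at this
  omega

end CharLemmas

section KerLemmas

variable {R : Type*} [Ring R] [Fintype R] {χ : AddChar R ℂ}

/-- The additive character `y ↦ χ (v ⬝ᵥ y)` on `Fin n → R`. -/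
def charV {n : ℕ} (χ : AddChar R ℂ) (v : Fin n → R) : AddChar (Fin n → R) ℂ where
  toFun y := χ (v ⬝ᵥ y)
  map_zero_eq_one' := by simp
  map_add_eq_mul' x y := by rw [dotProduct_add, AddChar.map_add_eq_mul]

/-- The additive character `x ↦ χ (x ⬝ᵥ v)` on `Fin n → R`. -/
def charV' {n : ℕ} (χ : AddChar R ℂ) (v : Fin n → R) : AddChar (Fin n → R) ℂ where
  toFun x := χ (x ⬝ᵥ v)
  map_zero_eq_one' := by simp
  map_add_eq_mul' x y := by rw [add_dotProduct, AddChar.map_add_eq_mul]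

lemma ker_card (hχ : IsGeneratingChar χ) {n : ℕ} (M : Matrix (Fin n) (Fin n) R) :
    Nat.card {x : Fin n → R // x ᵥ* M = 0} = Nat.card {y : Fin n → R // M *ᵥ y = 0} := by
  classical
  set c : ℂ := (Fintype.card (Fin n → R) : ℂ) with hc
  have hc0 : c ≠ 0 := Nat.cast_ne_zero.mpr Fintype.card_ne_zero
  have hsumV : ∀ v : Fin n → R, (∑ y : Fin n → R, χ (v ⬝ᵥ y)) = if v = 0 then c else 0 := by
    intro v
    rw [show (∑ y : Fin n → R, χ (v ⬝ᵥ y)) = ∑ y, (charV χ v) y from rfl, AddChar.sum_eq_ite]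
    congr 1
    simp only [eq_iff_iff]
    constructor
    · intro h
      funext j
      apply gen_left hχ
      intro t
      have := AddChar.eq_zero_iff.mp h (Pi.single j t)
      simpa [charV, dotProduct_single] using this
    · rintro rfl
      rw [AddChar.eq_zero_iff]
      intro y
      simp [charV]
  have hsumV' : ∀ v : Fin n → R, (∑ x : Fin n → R, χ (x ⬝ᵥ v)) = if v = 0 then c else 0 := by
    intro v
    rw [show (∑ x : Fin n → R, χ (x ⬝ᵥ v)) = ∑ x, (charV' χ v) x from rfl, AddChar.sum_eq_ite]
    congr 1
    simp only [eq_iff_iff]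
    constructor
    · intro h
      funext j
      apply gen_right hχ
      intro t
      have := AddChar.eq_zero_iff.mp h (Pi.single j t)
      simpa [charV', single_dotProduct] using this
    · rintro rfl
      rw [AddChar.eq_zero_iff]
      intro y
      simp [charV']
  have h1 : (∑ x : Fin n → R, ∑ y : Fin n → R, χ ((x ᵥ* M) ⬝ᵥ y))
      = ((Finset.univ.filter (fun x : Fin n → R => x ᵥ* M = 0)).card : ℂ) * c := by
    rw [Finset.sum_congr rfl (fun x _ => hsumV (x ᵥ* M)), ← Finset.sum_filter, Finset.sum_const,
      nsmul_eq_mul]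
  have h2 : (∑ x : Fin n → R, ∑ y : Fin n → R, χ ((x ᵥ* M) ⬝ᵥ y))
      = ((Finset.univ.filter (fun y : Fin n → R => M *ᵥ y = 0)).card : ℂ) * c := by
    have hrw : ∀ (x y : Fin n → R), χ ((x ᵥ* M) ⬝ᵥ y) = χ (x ⬝ᵥ (M *ᵥ y)) := by
      intro x y; rw [dotProduct_mulVec]
    simp_rw [hrw]
    rw [Finset.sum_comm]
    rw [Finset.sum_congr rfl (fun y _ => hsumV' (M *ᵥ y)), ← Finset.sum_filter,
      Finset.sum_const, nsmul_eq_mul]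
  have hcards : (Finset.univ.filter (fun x : Fin n → R => x ᵥ* M = 0)).card
      = (Finset.univ.filter (fun y : Fin n → R => M *ᵥ y = 0)).card := by
    have := h1.symm.trans h2
    have := mul_right_cancel₀ hc0 this
    exact_mod_cast this
  rw [Nat.card_eq_fintype_card, Nat.card_eq_fintype_card, Fintype.card_subtype,
    Fintype.card_subtype, hcards]

end KerLemmas

lemma burnside' {G X : Type*} [Group G] [Fintype G] [Fintype X] (f : G → X → X)
    (h1 : ∀ x, f 1 x = x) (hm : ∀ g h x, f (g * h) x = f g (f h x)) :
    Nat.card {S : Set X // ∃ v : X, S = {w | ∃ g : G, w = f g v}} * Fintype.card G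
      = ∑ g : G, Nat.card {x : X // f g x = x} := by
  classical
  letI act : MulAction G X := { smul := f, one_smul := h1, mul_smul := hm }
  have horb : ∀ v : X, {w | ∃ g : G, w = f g v} = MulAction.orbit G v := by
    intro v
    ext w
    simp only [Set.mem_setOf_eq, MulAction.mem_orbit_iff]
    exact ⟨fun ⟨g, hg⟩ => ⟨g, hg.symm⟩, fun ⟨g, hg⟩ => ⟨g, hg.symm⟩⟩
  letI : ∀ g : G, Fintype (MulAction.fixedBy X g) := fun g => Fintype.ofFinite _
  letI : Fintype (Quotient (MulAction.orbitRel G X)) := Fintype.ofFinite _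
  have hb := MulAction.sum_card_fixedBy_eq_card_orbits_mul_card_group G X
  -- identify the subtype of orbit sets with the orbit quotient
  have hq : Nat.card {S : Set X // ∃ v : X, S = {w | ∃ g : G, w = f g v}}
      = Fintype.card (Quotient (MulAction.orbitRel G X)) := by
    rw [← Nat.card_eq_fintype_card]
    refine (Nat.card_eq_of_bijective ?_ ?_).symm
    · exact Quotient.lift (fun v => (⟨MulAction.orbit G v, v, (horb v).symm ▸ horb v ▸ rfl⟩ :
        {S : Set X // ∃ v : X, S = {w | ∃ g : G, w = f g v}}))
        (fun a b h => Subtype.ext (MulAction.orbit_eq_iff.mpr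
          (MulAction.orbitRel_apply.mp h)))
    · constructor
      · intro a b
        induction a using Quotient.ind
        induction b using Quotient.ind
        intro h
        exact Quotient.sound (MulAction.orbitRel_apply.mpr
          (MulAction.orbit_eq_iff.mp (congrArg Subtype.val h)))
      · rintro ⟨S, v, rfl⟩
        exact ⟨⟦v⟧, Subtype.ext (horb v).symm⟩
  have hfix : ∀ g : G, Nat.card {x : X // f g x = x}
      = Fintype.card (MulAction.fixedBy X g) := by
    intro g
    rw [← Nat.card_eq_fintype_card]
    exact Nat.card_congr (Equiv.subtypeEquivRight (fun x => Iff.rfl))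
  rw [hq]
  rw [Finset.sum_congr rfl (fun g _ => hfix g)]
  exact hb.symm


set_option maxHeartbeats 1000000 in
/-- Over a finite Frobenius ring, the right action `(x,U) ↦ xU` and the left action
`(U,x) ↦ (U xᵀ)ᵀ` of a subgroup `𝒰 ≤ GL(n,R)` on `R^n` have the same number of orbits. -/
theorem card_rightOrbits_eq_card_leftOrbits
    {R : Type*} [Ring R] [Fintype R] (hR : IsFrobeniusRing R) {n : ℕ}
    (𝒰 : Subgroup (Matrix (Fin n) (Fin n) R)ˣ) :
    Nat.card {S : Set (Fin n → R) //
        ∃ v : Fin n → R, S = {w | ∃ U ∈ 𝒰, w = v ᵥ* U.val}} =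
    Nat.card {S : Set (Fin n → R) //
        ∃ v : Fin n → R, S = {w | ∃ U ∈ 𝒰, w = U.val *ᵥ v}} := by
  classical
  obtain ⟨χ, hχ⟩ := hR
  letI : Fintype ↥𝒰 := Fintype.ofFinite _
  set fR : ↥𝒰 → (Fin n → R) → (Fin n → R) :=
    fun g x => x ᵥ* (g⁻¹ : ↥𝒰).val.val with hfR
  set fL : ↥𝒰 → (Fin n → R) → (Fin n → R) :=
    fun g x => g.val.val *ᵥ x with hfL
  have hR1 : ∀ x, fR 1 x = x := by
    intro x
    show x ᵥ* ((1 : ↥𝒰)⁻¹).val.val = x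
    rw [inv_one, OneMemClass.coe_one, Units.val_one, vecMul_one]
  have hRm : ∀ g h x, fR (g * h) x = fR g (fR h x) := by
    intro g h x
    simp only [hfR, _root_.mul_inv_rev, Subgroup.coe_mul, Units.val_mul, vecMul_vecMul]
  have hL1 : ∀ x, fL 1 x = x := by
    intro x
    show ((1 : ↥𝒰)).val.val *ᵥ x = x
    rw [OneMemClass.coe_one, Units.val_one, one_mulVec]
  have hLm : ∀ g h x, fL (g * h) x = fL g (fL h x) := by
    intro g h x
    simp only [hfL, Subgroup.coe_mul, Units.val_mul, mulVec_mulVec]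
  have hbr := burnside' fR hR1 hRm
  have hbl := burnside' fL hL1 hLm
  -- identify orbit sets
  have hsetR : ∀ v : Fin n → R,
      {w | ∃ U ∈ 𝒰, w = v ᵥ* U.val} = {w | ∃ g : ↥𝒰, w = fR g v} := by
    intro v
    ext w
    simp only [Set.mem_setOf_eq]
    constructor
    · rintro ⟨U, hU, rfl⟩
      refine ⟨(⟨U, hU⟩ : ↥𝒰)⁻¹, ?_⟩
      show v ᵥ* U.val = v ᵥ* (((⟨U, hU⟩ : ↥𝒰)⁻¹)⁻¹).val.val
      rw [inv_inv]
    · rintro ⟨g, rfl⟩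
      exact ⟨(g⁻¹ : ↥𝒰).val, (g⁻¹ : ↥𝒰).property, rfl⟩
  have hsetL : ∀ v : Fin n → R,
      {w | ∃ U ∈ 𝒰, w = U.val *ᵥ v} = {w | ∃ g : ↥𝒰, w = fL g v} := by
    intro v
    ext w
    simp only [Set.mem_setOf_eq]
    constructor
    · rintro ⟨U, hU, rfl⟩
      exact ⟨(⟨U, hU⟩ : ↥𝒰), rfl⟩
    · rintro ⟨g, rfl⟩
      refine ⟨g.val, g.property, ?_⟩
      rw [hfL]
  have hcardR : Nat.card {S : Set (Fin n → R) //
        ∃ v : Fin n → R, S = {w | ∃ U ∈ 𝒰, w = v ᵥ* U.val}}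
      = Nat.card {S : Set (Fin n → R) // ∃ v : Fin n → R, S = {w | ∃ g : ↥𝒰, w = fR g v}} :=
    Nat.card_congr (Equiv.subtypeEquivRight (fun S => by
      constructor
      · rintro ⟨v, rfl⟩; exact ⟨v, hsetR v⟩
      · rintro ⟨v, rfl⟩; exact ⟨v, (hsetR v).symm⟩))
  have hcardL : Nat.card {S : Set (Fin n → R) //
        ∃ v : Fin n → R, S = {w | ∃ U ∈ 𝒰, w = U.val *ᵥ v}}
      = Nat.card {S : Set (Fin n → R) // ∃ v : Fin n → R, S = {w | ∃ g : ↥𝒰, w = fL g v}} :=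
    Nat.card_congr (Equiv.subtypeEquivRight (fun S => by
      constructor
      · rintro ⟨v, rfl⟩; exact ⟨v, hsetL v⟩
      · rintro ⟨v, rfl⟩; exact ⟨v, (hsetL v).symm⟩))
  -- termwise equality of fixed point counts
  have hfix : ∀ g : ↥𝒰, Nat.card {x : Fin n → R // fR g x = x}
      = Nat.card {x : Fin n → R // fL g x = x} := by
    intro g
    set A : (Matrix (Fin n) (Fin n) R)ˣ := g.val with hA
    have hAA : (A⁻¹).val * A.val = 1 := by
      rw [← Units.val_mul, inv_mul_cancel, Units.val_one]
    have hAA' : A.val * (A⁻¹).val = 1 := by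
      rw [← Units.val_mul, mul_inv_cancel, Units.val_one]
    have hinv2 : (g⁻¹ : ↥𝒰).val = A⁻¹ := by
      rw [hA]; exact InvMemClass.coe_inv g
    have hfRg : ∀ x : Fin n → R, fR g x = x ᵥ* (A⁻¹).val := by
      intro x
      show x ᵥ* (g⁻¹ : ↥𝒰).val.val = x ᵥ* (A⁻¹).val
      rw [hinv2]
    have e1 : ∀ x : Fin n → R, fR g x = x ↔ x ᵥ* (A.val - 1) = 0 := by
      intro x
      rw [vecMul_sub, vecMul_one, sub_eq_zero]
      constructor
      · intro h
        calc x ᵥ* A.val = (fR g x) ᵥ* A.val := by rw [h]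
          _ = (x ᵥ* (A⁻¹).val) ᵥ* A.val := by rw [hfRg]
          _ = x ᵥ* ((A⁻¹).val * A.val) := vecMul_vecMul x _ _
          _ = x := by rw [hAA, vecMul_one]
      · intro h
        calc fR g x = x ᵥ* (A⁻¹).val := hfRg x
          _ = (x ᵥ* A.val) ᵥ* (A⁻¹).val := by rw [h]
          _ = x ᵥ* (A.val * (A⁻¹).val) := vecMul_vecMul x _ _
          _ = x := by rw [hAA', vecMul_one]
    have e2 : ∀ x : Fin n → R, fL g x = x ↔ (A.val - 1) *ᵥ x = 0 := by
      intro x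
      rw [hfL, sub_mulVec, one_mulVec, sub_eq_zero]
    calc Nat.card {x : Fin n → R // fR g x = x}
        = Nat.card {x : Fin n → R // x ᵥ* (A.val - 1) = 0} :=
          Nat.card_congr (Equiv.subtypeEquivRight e1)
      _ = Nat.card {x : Fin n → R // (A.val - 1) *ᵥ x = 0} := ker_card hχ _
      _ = Nat.card {x : Fin n → R // fL g x = x} :=
          (Nat.card_congr (Equiv.subtypeEquivRight e2)).symm
  rw [hcardR, hcardL]
  have hsum : (∑ g : ↥𝒰, Nat.card {x : Fin n → R // fR g x = x})
      = ∑ g : ↥𝒰, Nat.card {x : Fin n → R // fL g x = x} :=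
    Finset.sum_congr rfl (fun g _ => hfix g)
  have key : Nat.card {S : Set (Fin n → R) // ∃ v : Fin n → R, S = {w | ∃ g : ↥𝒰, w = fR g v}}
        * Fintype.card ↥𝒰
      = Nat.card {S : Set (Fin n → R) // ∃ v : Fin n → R, S = {w | ∃ g : ↥𝒰, w = fL g v}}
        * Fintype.card ↥𝒰 := by
    rw [hbr, hsum, ← hbl]
  exact Nat.eq_of_mul_eq_mul_right Fintype.card_pos key
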